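/- Let R be a commutative noetherian ring, S a left noetherian ring which is an R-algebra, and M an S-module that is finitely generated as an S-module. Then the set Ass(M) of associated primes of M is finite. -/

import Mathlib

/-- Annihilator in `R` of an `S`-submodule, `R` acting through `algebraMap R S`. -/
def annRS (R : Type*) {S M : Type*} [CommRing R] [Ring S] [Algebra R S]
    [AddCommGroup M] [Module S M] (N : Submodule S M) : Ideal R where
  carrier := {r : R | ∀ x ∈ N, algebraMap R S r • x = 0}
  zero_mem' := by intro x _; simp
  add_mem' := by
    intro a b ha hb x hx
    rw [map_add, add_smul, ha x hx, hb x hx, add_zero]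
  smul_mem' := by
    intro c a ha x hx
    rw [smul_eq_mul, map_mul, mul_smul, ha x hx, smul_zero]

/-- An `R`-elementary object: nonzero, finitely generated, and the `R`-annihilator of
every nonzero subobject equals a fixed prime ideal `p` of `R`. -/
def IsRElem (R : Type*) {S M : Type*} [CommRing R] [Ring S] [Algebra R S]
    [AddCommGroup M] [Module S M] (L : Submodule S M) : Prop :=
  L ≠ ⊥ ∧ L.FG ∧ ∃ p : Ideal R, p.IsPrime ∧
    ∀ L' : Submodule S M, L' ≤ L → L' ≠ ⊥ → annRS R L' = p

/-- Associated primes of the subobject `N`. -/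
def RAssOf (R : Type*) {S M : Type*} [CommRing R] [Ring S] [Algebra R S]
    [AddCommGroup M] [Module S M] (N : Submodule S M) : Set (Ideal R) :=
  {p | ∃ L : Submodule S M, L ≤ N ∧ IsRElem R L ∧ annRS R L = p}

section Aux

variable (R : Type*) {S M : Type*} [CommRing R] [Ring S] [Algebra R S]
  [AddCommGroup M] [Module S M]

lemma mem_annRS' {N : Submodule S M} {r : R} :
    r ∈ annRS R N ↔ ∀ x ∈ N, algebraMap R S r • x = 0 := Iff.rfl

lemma annRS_mono {N N' : Submodule S M} (h : N ≤ N') : annRS R N' ≤ annRS R N :=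
  fun r hr x hx => hr x (h hx)

/-- Scalar multiplication by `algebraMap R S a` as an `S`-linear map. -/
def aSmul (a : R) : M →ₗ[S] M where
  toFun x := algebraMap R S a • x
  map_add' := smul_add _
  map_smul' s x := by
    rw [RingHom.id_apply, ← mul_smul, Algebra.commutes a s, mul_smul]

/-- Any nonzero noetherian module contains an `R`-elementary submodule. -/
lemma exists_isRElem [IsNoetherianRing R] [IsNoetherian S M]
    (h : (⊤ : Submodule S M) ≠ ⊥) : ∃ L : Submodule S M, IsRElem R L := by
  set 𝒜 : Set (Ideal R) := {I | ∃ L : Submodule S M, L ≠ ⊥ ∧ annRS R L = I} with h𝒜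
  have hne : 𝒜.Nonempty := ⟨annRS R ⊤, ⊤, h, rfl⟩
  obtain ⟨p, ⟨L₀, hL₀ne, hL₀ann⟩, hmax⟩ :=
    (set_has_maximal_iff_noetherian.mpr (inferInstance : IsNoetherian R R)) 𝒜 hne
  have key : ∀ L' : Submodule S M, L' ≤ L₀ → L' ≠ ⊥ → annRS R L' = p := by
    intro L' hle hne'
    have h1 : p ≤ annRS R L' := hL₀ann ▸ annRS_mono R hle
    have h2 : annRS R L' ∈ 𝒜 := ⟨L', hne', rfl⟩
    by_contra hne2
    exact hmax _ h2 (lt_of_le_of_ne h1 (Ne.symm hne2))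
  refine ⟨L₀, hL₀ne, IsNoetherian.noetherian L₀, p, ?_, key⟩
  constructor
  · -- p ≠ ⊤
    intro htop
    apply hL₀ne
    rw [Submodule.eq_bot_iff]
    intro x hx
    have := (hL₀ann ▸ (htop ▸ Submodule.mem_top : (1 : R) ∈ p)) x hx
    simpa using this
  · intro a b hab
    by_cases ha : a ∈ p
    · exact Or.inl ha
    right
    -- consider a • L₀
    set L₁ := Submodule.map (aSmul R a) L₀ with hL₁
    have hL₁le : L₁ ≤ L₀ := by
      rintro _ ⟨x, hx, rfl⟩
      exact Submodule.smul_mem _ _ hx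
    have hL₁ne : L₁ ≠ ⊥ := by
      intro hbot
      apply ha
      rw [← hL₀ann]
      intro x hx
      have : (aSmul R a) x ∈ L₁ := Submodule.mem_map_of_mem hx
      rw [hbot, Submodule.mem_bot] at this
      exact this
    have := key L₁ hL₁le hL₁ne
    rw [← this]
    rintro _ ⟨x, hx, rfl⟩
    show algebraMap R S b • algebraMap R S a • x = 0
    rw [← mul_smul, ← map_mul, mul_comm b a]
    exact (hL₀ann ▸ hab) x hx

end Aux

/-- If `R` is commutative noetherian, `S` is a left noetherian `R`-algebra and `M` is a
finitely generated `S`-module, then the set of associated primes of `M` is finite. -/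
theorem rAss_finite_of_fg
    (R S M : Type*) [CommRing R] [IsNoetherianRing R] [Ring S] [IsNoetherianRing S]
    [Algebra R S] [AddCommGroup M] [Module S M] (hfg : (⊤ : Submodule S M).FG) :
    (RAssOf R (⊤ : Submodule S M)).Finite := by
  haveI : Module.Finite S M := Module.finite_def.mpr hfg
  haveI : IsNoetherian S M := inferInstance
  set 𝒮 : Set (Submodule S M) := {N | (RAssOf R N).Finite} with h𝒮
  have hbot : (⊥ : Submodule S M) ∈ 𝒮 := by
    apply Set.Finite.subset (Set.finite_empty)
    rintro p ⟨L, hle, ⟨hLne, _⟩, _⟩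
    exact absurd (le_bot_iff.mp hle) hLne
  obtain ⟨N, hN, hmax⟩ :=
    (set_has_maximal_iff_noetherian.mpr (inferInstance : IsNoetherian S M)) 𝒮 ⟨⊥, hbot⟩
  rcases eq_or_ne N ⊤ with rfl | hNtop
  · exact hN
  exfalso
  -- pass to quotient
  haveI : Nontrivial (M ⧸ N) := Submodule.Quotient.nontrivial_iff.mpr hNtop
  have hQ : (⊤ : Submodule S (M ⧸ N)) ≠ ⊥ := by
    intro hbot'
    obtain ⟨x, hx⟩ := exists_ne (0 : M ⧸ N)
    exact hx (by simpa using (hbot' ▸ Submodule.mem_top : x ∈ (⊥ : Submodule S (M ⧸ N))))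
  obtain ⟨Lbar, hLbarNe, _, pbar, hpbarPrime, hLbarAll⟩ := exists_isRElem R (M := M ⧸ N) hQ
  have hLbarAnn : annRS R Lbar = pbar := hLbarAll Lbar le_rfl hLbarNe
  set N' := Lbar.comap N.mkQ with hN'
  have hNleN' : N ≤ N' := by
    intro x hx
    show N.mkQ x ∈ Lbar
    rw [show N.mkQ x = 0 from (Submodule.Quotient.mk_eq_zero N).mpr hx]
    exact Lbar.zero_mem
  have hNltN' : N < N' := by
    refine lt_of_le_of_ne hNleN' ?_
    intro heq
    apply hLbarNe
    have hsurj : Function.Surjective N.mkQ := Submodule.mkQ_surjective N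
    have : Submodule.map N.mkQ N' = Lbar := by
      rw [hN', Submodule.map_comap_eq, Submodule.range_mkQ, top_inf_eq]
    rw [← this, ← heq, Submodule.eq_bot_iff]
    rintro _ ⟨x, hx, rfl⟩
    exact (Submodule.Quotient.mk_eq_zero N).mpr hx
  -- RAssOf R N' ⊆ RAssOf R N ∪ {pbar}
  have hsub : RAssOf R N' ⊆ RAssOf R N ∪ {pbar} := by
    rintro p ⟨L', hL'le, ⟨hL'ne, hL'fg, q, hqPrime, hqAll⟩, hL'ann⟩
    have hq : annRS R L' = q := hqAll L' le_rfl hL'ne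
    by_cases hint : L' ⊓ N = ⊥
    · -- L' embeds in the quotient; p = pbar
      right
      set L'' := Submodule.map N.mkQ L' with hL''
      have hL''le : L'' ≤ Lbar := Submodule.map_le_iff_le_comap.mpr hL'le
      have hL''ne : L'' ≠ ⊥ := by
        intro hbot'
        apply hL'ne
        rw [Submodule.eq_bot_iff]
        intro x hx
        have hxN : x ∈ N := by
          have : N.mkQ x ∈ L'' := Submodule.mem_map_of_mem hx
          rw [hbot', Submodule.mem_bot] at this
          exact (Submodule.Quotient.mk_eq_zero N).mp this
        have : x ∈ L' ⊓ N := ⟨hx, hxN⟩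
        rwa [hint, Submodule.mem_bot] at this
      have hannEq : annRS R L' = annRS R L'' := by
        ext r
        constructor
        · rintro hr _ ⟨x, hx, rfl⟩
          show algebraMap R S r • N.mkQ x = 0
          rw [← map_smul, hr x hx, map_zero]
        · intro hr x hx
          have h0 : N.mkQ (algebraMap R S r • x) = 0 := by
            rw [map_smul]
            exact hr _ (Submodule.mem_map_of_mem hx)
          have hmem : algebraMap R S r • x ∈ L' ⊓ N :=
            ⟨Submodule.smul_mem _ _ hx, (Submodule.Quotient.mk_eq_zero N).mp h0⟩
          rwa [hint, Submodule.mem_bot] at hmem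
      have : annRS R L'' = pbar := hLbarAll L'' hL''le hL''ne
      rw [← hL'ann, hannEq, this]
      rfl
    · -- L' ⊓ N is elementary inside N
      left
      refine ⟨L' ⊓ N, inf_le_right, ⟨hint, IsNoetherian.noetherian _, q, hqPrime, ?_⟩, ?_⟩
      · intro L₂ h2 hne2
        exact hqAll L₂ (h2.trans inf_le_left) hne2
      · rw [hqAll _ inf_le_left hint, ← hq, hL'ann]
  have hN'fin : (RAssOf R N').Finite :=
    Set.Finite.subset (hN.union (Set.finite_singleton pbar)) hsub
  exact hmax N' hN'fin hNltN'
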